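/- Zames–Falb ρ-hard IQC with a general signed filter for odd nonlinearities (Theorem 18, odd case, time domain). Let n ∈ ℕ and let g : ℝⁿ → ℝ be an admissible potential with gradient ∇g, and assume additionally that g is even, i.e. g(−x) = g(x) for all x (so that ∇g is odd). Let ρ ∈ (0,1] and let h : ℕ → ℝ satisfy ∑_{k=0}^{∞} ρ^{−2k} |h_k| ≤ 1 (the series being summable). Let y : ℕ → ℝⁿ be any sequence and set u_k = ∇g(y_k). Then for every T ∈ ℕ: ∑_{k=0}^{T} ρ^{−2k} ⟨u_k, y_k − ∑_{j=0}^{k} h_j·y_{k−j}⟩ ≥ 0. -/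

import Mathlib

open scoped RealInnerProductSpace

private lemma grad_ineq_aux {n : ℕ} (g : EuclideanSpace ℝ (Fin n) → ℝ)
    (hconv : ConvexOn ℝ Set.univ g) (hdiff : Differentiable ℝ g)
    (x z : EuclideanSpace ℝ (Fin n)) :
    g x + ⟪gradient g x, z - x⟫ ≤ g z := by
  set c := z - x with hc
  set φ : ℝ → ℝ := fun t => g (x + t • c) with hφdef
  have hline : HasDerivAt (fun t : ℝ => x + t • c) c 0 := by
    simpa using ((hasDerivAt_id (0:ℝ)).smul_const c).const_add x
  have hg := (hdiff x).hasGradientAt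
  rw [hasGradientAt_iff_hasFDerivAt] at hg
  have hg' : HasFDerivAt g ((InnerProductSpace.toDual ℝ _) (gradient g x)) (x + (0:ℝ) • c) := by
    simpa using hg
  have hφ : HasDerivAt φ ⟪gradient g x, c⟫ 0 := by
    have := hg'.comp_hasDerivAt 0 hline
    simpa [InnerProductSpace.toDual_apply_apply, Function.comp_def, hφdef] using this
  have hφc : ConvexOn ℝ Set.univ φ := by
    refine ⟨convex_univ, ?_⟩
    intro a _ b _ p q hp hq hpq
    have key : x + (p • a + q • b) • c = p • (x + a • c) + q • (x + b • c) := by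
      have : p • (x + a • c) + q • (x + b • c) = (p + q) • x + (p * a + q * b) • c := by
        simp only [smul_add, add_smul, mul_smul]
        abel
      rw [this, hpq, one_smul]
      simp [smul_eq_mul]
    show g (x + (p • a + q • b) • c) ≤ p • g (x + a • c) + q • g (x + b • c)
    rw [key]
    exact hconv.2 (Set.mem_univ _) (Set.mem_univ _) hp hq hpq
  have hs := hφc.le_slope_of_hasDerivAt (Set.mem_univ (0:ℝ)) (Set.mem_univ (1:ℝ))
    one_pos hφ
  rw [slope_def_field] at hs
  have hφ1 : φ 1 = g z := by simp [hφdef, hc]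
  have hφ0 : φ 0 = g x := by simp [hφdef]
  rw [hφ1, hφ0] at hs
  have : ⟪gradient g x, c⟫ ≤ g z - g x := by
    calc ⟪gradient g x, c⟫ ≤ (g z - g x) / (1 - 0) := hs
    _ = g z - g x := by norm_num
  linarith

/-- Theorem 18, odd case (time domain): the Zames–Falb multiplier with a general
signed filter `h` satisfying `∑ ρ⁻²ᵏ |hₖ| ≤ 1` defines a ρ-hard IQC for the odd
monotone gradient nonlinearity `∇g` of an even admissible potential `g`. -/
theorem stmt_10 {n : ℕ} (g : EuclideanSpace ℝ (Fin n) → ℝ)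
    (hconv : ConvexOn ℝ Set.univ g) (hdiff : Differentiable ℝ g)
    (hnonneg : ∀ x, 0 ≤ g x) (hg0 : g 0 = 0)
    (heven : ∀ x, g (-x) = g x)
    (ρ : ℝ) (hρ : ρ ∈ Set.Ioc (0 : ℝ) 1)
    (h : ℕ → ℝ)
    (hsum : Summable (fun k : ℕ => ρ ^ (-(2 * (k : ℤ))) * |h k|))
    (hsum1 : ∑' k : ℕ, ρ ^ (-(2 * (k : ℤ))) * |h k| ≤ 1)
    (y : ℕ → EuclideanSpace ℝ (Fin n)) (u : ℕ → EuclideanSpace ℝ (Fin n))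
    (hu : ∀ k, u k = gradient g (y k)) :
    ∀ T : ℕ, 0 ≤ ∑ k ∈ Finset.range (T + 1),
      ρ ^ (-(2 * (k : ℤ))) *
        ⟪u k, y k - ∑ j ∈ Finset.range (k + 1), h j • y (k - j)⟫ := by
  intro T
  obtain ⟨hρ0, hρ1⟩ := hρ
  set r : ℕ → ℝ := fun k => ρ ^ (-(2 * (k : ℤ))) with hr
  have hrpos : ∀ k, 0 < r k := fun k => zpow_pos hρ0 _
  have hrone : ∀ k, 1 ≤ r k := by
    intro k
    have h1 : ρ ^ (2 * k) ≤ 1 := pow_le_one₀ hρ0.le hρ1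
    have h2 : (0:ℝ) < ρ ^ (2 * k) := pow_pos hρ0 _
    have : r k = (ρ ^ (2 * k))⁻¹ := by
      show ρ ^ (-(2 * (k:ℤ))) = (ρ ^ (2 * k))⁻¹
      rw [show (-(2 * (k:ℤ))) = -((2*k : ℕ) : ℤ) by push_cast; ring, zpow_neg, zpow_natCast]
    rw [this]
    exact (one_le_inv₀ h2).mpr h1
  set G : ℕ → ℝ := fun k => g (y k) with hG
  set a : ℕ → ℝ := fun k => ⟪u k, y k⟫ - G k with ha
  have hGnn : ∀ k, 0 ≤ G k := fun k => hnonneg _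
  have hann : ∀ k, 0 ≤ a k := by
    intro k
    have := grad_ineq_aux g hconv hdiff (y k) 0
    rw [← hu k] at this
    simp only [zero_sub, inner_neg_right, hg0] at this
    simp only [ha, hG]
    linarith
  -- bound on cross terms
  have hcross : ∀ k j, h j * ⟪u k, y (k - j)⟫ ≤ |h j| * (a k + G (k - j)) := by
    intro k j
    have hB1 : ⟪u k, y (k - j)⟫ ≤ a k + G (k - j) := by
      have := grad_ineq_aux g hconv hdiff (y k) (y (k - j))
      rw [← hu k, inner_sub_right] at this
      simp only [ha, hG]; linarith
    have hB2 : -⟪u k, y (k - j)⟫ ≤ a k + G (k - j) := by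
      have := grad_ineq_aux g hconv hdiff (y k) (-(y (k - j)))
      rw [← hu k, inner_sub_right, inner_neg_right, heven] at this
      simp only [ha, hG]; linarith
    have habs : |⟪u k, y (k - j)⟫| ≤ a k + G (k - j) := abs_le.mpr ⟨by linarith, hB1⟩
    calc h j * ⟪u k, y (k - j)⟫ ≤ |h j * ⟪u k, y (k - j)⟫| := le_abs_self _
      _ = |h j| * |⟪u k, y (k - j)⟫| := abs_mul _ _
      _ ≤ |h j| * (a k + G (k - j)) :=
          mul_le_mul_of_nonneg_left habs (abs_nonneg _)
  -- partial sums of weights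
  have hwsum : ∀ m : ℕ, ∑ j ∈ Finset.range m, r j * |h j| ≤ 1 := by
    intro m
    exact le_trans (Summable.sum_le_tsum _ (fun i _ => mul_nonneg (hrpos i).le (abs_nonneg _)) hsum) hsum1
  have hwsum' : ∀ m : ℕ, ∑ j ∈ Finset.range m, |h j| ≤ 1 := by
    intro m
    refine le_trans (Finset.sum_le_sum fun j _ => ?_) (hwsum m)
    nlinarith [hrone j, abs_nonneg (h j)]
  -- expand the inner products
  have hinner : ∀ k, ⟪u k, y k - ∑ j ∈ Finset.range (k + 1), h j • y (k - j)⟫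
      = a k + G k - ∑ j ∈ Finset.range (k + 1), h j * ⟪u k, y (k - j)⟫ := by
    intro k
    rw [inner_sub_right, inner_sum]
    simp only [real_inner_smul_right, ha]
    ring
  -- per-term lower bound
  have hterm : ∀ k, r k * (a k + G k - ∑ j ∈ Finset.range (k + 1), |h j| * (a k + G (k - j)))
      ≤ r k * ⟪u k, y k - ∑ j ∈ Finset.range (k + 1), h j • y (k - j)⟫ := by
    intro k
    rw [hinner k]
    refine mul_le_mul_of_nonneg_left ?_ (hrpos k).le
    have := Finset.sum_le_sum (fun j (_ : j ∈ Finset.range (k+1)) => hcross k j)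
    linarith
  refine le_trans ?_ (Finset.sum_le_sum fun k _ => hterm k)
  -- split the lower bound sum
  have hsplit : ∀ k, r k * (a k + G k - ∑ j ∈ Finset.range (k + 1), |h j| * (a k + G (k - j)))
      = r k * a k * (1 - ∑ j ∈ Finset.range (k + 1), |h j|)
        + (r k * G k - ∑ j ∈ Finset.range (k + 1), (r j * |h j|) * (r (k - j) * G (k - j))) := by
    intro k
    have e1 : ∑ j ∈ Finset.range (k + 1), |h j| * (a k + G (k - j))
        = (∑ j ∈ Finset.range (k + 1), |h j|) * a k
          + ∑ j ∈ Finset.range (k + 1), |h j| * G (k - j) := by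
      rw [Finset.sum_mul, ← Finset.sum_add_distrib]
      exact Finset.sum_congr rfl fun j _ => by ring
    have e2 : ∑ j ∈ Finset.range (k + 1), (r j * |h j|) * (r (k - j) * G (k - j))
        = r k * ∑ j ∈ Finset.range (k + 1), |h j| * G (k - j) := by
      rw [Finset.mul_sum]
      refine Finset.sum_congr rfl fun j hj => ?_
      have hjk : j ≤ k := Nat.lt_succ_iff.mp (Finset.mem_range.mp hj)
      have : r k = r j * r (k - j) := by
        rw [hr]
        rw [← zpow_add₀ (ne_of_gt hρ0)]
        congr 1
        have : ((k - j : ℕ) : ℤ) = (k : ℤ) - (j : ℤ) := by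
          push_cast [Nat.cast_sub hjk]; ring
        rw [this]; ring
      rw [this]; ring
    rw [e1, e2]
    ring
  rw [show (∑ k ∈ Finset.range (T + 1),
      r k * (a k + G k - ∑ j ∈ Finset.range (k + 1), |h j| * (a k + G (k - j))))
    = (∑ k ∈ Finset.range (T + 1), r k * a k * (1 - ∑ j ∈ Finset.range (k + 1), |h j|))
      + ((∑ k ∈ Finset.range (T + 1), r k * G k)
        - ∑ k ∈ Finset.range (T + 1), ∑ j ∈ Finset.range (k + 1),
            (r j * |h j|) * (r (k - j) * G (k - j))) from by
    rw [← Finset.sum_sub_distrib, ← Finset.sum_add_distrib]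
    exact Finset.sum_congr rfl fun k _ => hsplit k]
  have hpart1 : 0 ≤ ∑ k ∈ Finset.range (T + 1),
      r k * a k * (1 - ∑ j ∈ Finset.range (k + 1), |h j|) := by
    refine Finset.sum_nonneg fun k _ => ?_
    have h1 := hwsum' (k + 1)
    exact mul_nonneg (mul_nonneg (hrpos k).le (hann k)) (by linarith)
  -- the double sum is at most the weighted energy
  have hpart2 : ∑ k ∈ Finset.range (T + 1), ∑ j ∈ Finset.range (k + 1),
        (r j * |h j|) * (r (k - j) * G (k - j))
      ≤ ∑ k ∈ Finset.range (T + 1), r k * G k := by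
    have hswap := Finset.sum_Ico_Ico_comm 0 (T + 1)
      (fun j k => (r j * |h j|) * (r (k - j) * G (k - j)))
    simp only [Nat.Ico_zero_eq_range] at hswap
    rw [show (∑ k ∈ Finset.range (T + 1), ∑ j ∈ Finset.range (k + 1),
        (r j * |h j|) * (r (k - j) * G (k - j)))
      = ∑ j ∈ Finset.range (T + 1), ∑ k ∈ Finset.Ico j (T + 1),
        (r j * |h j|) * (r (k - j) * G (k - j)) from hswap.symm]
    calc ∑ j ∈ Finset.range (T + 1), ∑ k ∈ Finset.Ico j (T + 1),
            (r j * |h j|) * (r (k - j) * G (k - j))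
        = ∑ j ∈ Finset.range (T + 1), (r j * |h j|)
            * ∑ i ∈ Finset.range (T + 1 - j), r i * G i := by
          refine Finset.sum_congr rfl fun j _ => ?_
          rw [Finset.sum_Ico_eq_sum_range, Finset.mul_sum]
          exact Finset.sum_congr rfl fun i _ => by
            rw [Nat.add_sub_cancel_left]
      _ ≤ ∑ j ∈ Finset.range (T + 1), (r j * |h j|)
            * ∑ i ∈ Finset.range (T + 1), r i * G i := by
          refine Finset.sum_le_sum fun j _ => ?_
          refine mul_le_mul_of_nonneg_left ?_
            (mul_nonneg (hrpos j).le (abs_nonneg _))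
          refine Finset.sum_le_sum_of_subset_of_nonneg
            (Finset.range_subset_range.mpr (by omega)) fun i _ _ =>
            mul_nonneg (hrpos i).le (hGnn i)
      _ = (∑ j ∈ Finset.range (T + 1), r j * |h j|)
            * ∑ i ∈ Finset.range (T + 1), r i * G i := by
          rw [Finset.sum_mul]
      _ ≤ 1 * ∑ i ∈ Finset.range (T + 1), r i * G i := by
          refine mul_le_mul_of_nonneg_right (hwsum (T + 1))
            (Finset.sum_nonneg fun i _ => mul_nonneg (hrpos i).le (hGnn i))
      _ = ∑ k ∈ Finset.range (T + 1), r k * G k := one_mul _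
  linarith
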